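/- Let H be a hypergraph on vertex set V whose edges are partitioned into 'A-edges' and 'B-edges'. Say H is Rado if every red-blue colouring of V yields a red A-edge (all vertices red) or a blue B-edge (all vertices blue). Suppose H is Rado but H−e is not Rado for every edge e (H is Rado minimal), and H is non-empty. Then for every A-edge a of H and every vertex v ∈ a, there exists a B-edge b of H with a ∩ b = {v}; and symmetrically, for every B-edge b of H and every vertex v ∈ b, there exists an A-edge a of H with a ∩ b = {v}. -/
import Mathlib


/-- A hypergraph with A-edges `EA` and B-edges `EB` is Rado if every red-blue
colouring of the vertices (red = `true`, blue = `false`) yields a red A-edge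
or a blue B-edge. -/
def RadoHG {V : Type*} (EA EB : Set (Finset V)) : Prop :=
  ∀ c : V → Bool,
    (∃ a ∈ EA, ∀ v ∈ a, c v = true) ∨ (∃ b ∈ EB, ∀ v ∈ b, c v = false)

/-- if H (with A-edges EA and B-edges EB) is non-empty and Rado minimal,
then every vertex v of an A-edge a admits a B-edge b with a ∩ b = {v}, and
symmetrically. -/
theorem stmt_3 {V : Type*} [DecidableEq V] (EA EB : Set (Finset V))
    (hne : EA.Nonempty ∨ EB.Nonempty)
    (hR : RadoHG EA EB)
    (hminA : ∀ a ∈ EA, ¬ RadoHG (EA \ {a}) EB)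
    (hminB : ∀ b ∈ EB, ¬ RadoHG EA (EB \ {b})) :
    (∀ a ∈ EA, ∀ v ∈ a, ∃ b ∈ EB, a ∩ b = {v}) ∧
    (∀ b ∈ EB, ∀ v ∈ b, ∃ a ∈ EA, a ∩ b = {v}) := by
  constructor
  · intro a ha v hv
    have h := hminA a ha
    unfold RadoHG at h
    push_neg at h
    obtain ⟨c, hA, hB⟩ := h
    -- a must be all red under c
    have hared : ∀ w ∈ a, c w = true := by
      rcases hR c with ⟨a', ha', hred⟩ | ⟨b, hb, hblue⟩
      · rcases eq_or_ne a' a with rfl | hne'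
        · exact hred
        · exact absurd hred (by obtain ⟨w, hw, hcw⟩ := hA a' ⟨ha', hne'⟩; exact fun h => hcw (h w hw))
      · obtain ⟨w, hw, hcw⟩ := hB b hb
        exact absurd (hblue w hw) hcw
    -- flip v to blue
    set c' : V → Bool := Function.update c v false with hc'
    have hc'v : c' v = false := Function.update_self v false c
    have hc'ne : ∀ w, w ≠ v → c' w = c w := fun w hw => Function.update_of_ne hw false c
    rcases hR c' with ⟨a', ha', hred⟩ | ⟨b, hb, hblue⟩
    · rcases eq_or_ne a' a with rfl | hne'
      · have := hred v hv
        rw [hc'v] at this; exact absurd this (by simp)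
      · obtain ⟨w, hw, hcw⟩ := hA a' ⟨ha', hne'⟩
        have hwv : w ≠ v := by
          rintro rfl
          have := hred w hw; rw [hc'v] at this; exact absurd this (by simp)
        have := hred w hw
        rw [hc'ne w hwv] at this
        exact absurd this hcw
    · refine ⟨b, hb, ?_⟩
      have hvb : v ∈ b := by
        by_contra hvb
        obtain ⟨w, hw, hcw⟩ := hB b hb
        have := hblue w hw
        rw [hc'ne w (fun h => hvb (h ▸ hw))] at this
        exact hcw this
      ext w
      simp only [Finset.mem_inter, Finset.mem_singleton]
      constructor
      · rintro ⟨hwa, hwb⟩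
        by_contra hwv
        have h1 := hared w hwa
        have h2 := hblue w hwb
        rw [hc'ne w hwv] at h2
        rw [h1] at h2; exact absurd h2 (by simp)
      · rintro rfl; exact ⟨hv, hvb⟩
  · intro b hb v hv
    have h := hminB b hb
    unfold RadoHG at h
    push_neg at h
    obtain ⟨c, hA, hB⟩ := h
    have hbblue : ∀ w ∈ b, c w = false := by
      rcases hR c with ⟨a, ha, hred⟩ | ⟨b', hb', hblue⟩
      · obtain ⟨w, hw, hcw⟩ := hA a ha
        exact absurd (hred w hw) hcw
      · rcases eq_or_ne b' b with rfl | hne'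
        · exact hblue
        · exact absurd hblue (by obtain ⟨w, hw, hcw⟩ := hB b' ⟨hb', hne'⟩; exact fun h => hcw (h w hw))
    set c' : V → Bool := Function.update c v true with hc'
    have hc'v : c' v = true := Function.update_self v true c
    have hc'ne : ∀ w, w ≠ v → c' w = c w := fun w hw => Function.update_of_ne hw true c
    rcases hR c' with ⟨a, ha, hred⟩ | ⟨b', hb', hblue⟩
    · refine ⟨a, ha, ?_⟩
      have hva : v ∈ a := by
        by_contra hva
        obtain ⟨w, hw, hcw⟩ := hA a ha
        have := hred w hw
        rw [hc'ne w (fun h => hva (h ▸ hw))] at this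
        exact hcw this
      ext w
      simp only [Finset.mem_inter, Finset.mem_singleton]
      constructor
      · rintro ⟨hwa, hwb⟩
        by_contra hwv
        have h1 := hbblue w hwb
        have h2 := hred w hwa
        rw [hc'ne w hwv] at h2
        rw [h1] at h2; exact absurd h2 (by simp)
      · rintro rfl; exact ⟨hva, hv⟩
    · rcases eq_or_ne b' b with rfl | hne'
      · have := hblue v hv
        rw [hc'v] at this; exact absurd this (by simp)
      · obtain ⟨w, hw, hcw⟩ := hB b' ⟨hb', hne'⟩
        have hwv : w ≠ v := by
          rintro rfl
          have := hblue w hw; rw [hc'v] at this; exact absurd this (by simp)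
        have := hblue w hw
        rw [hc'ne w hwv] at this
        exact absurd this hcw
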